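/- Let I, J ≥ 2. The number of saturated fractions of the I × J design, i.e., finsets F of Fin I × Fin J with card F = I + J − 1 whose model rows are linearly independent over ℝ, equals I^{J−1} · J^{I−1}. -/

import Mathlib

/-- The model row of a design point `(i, j)` under the simple effect model:
a `1` (for the grand mean), the indicators of the first `I - 1` row levels,
and the indicators of the first `J - 1` column levels. -/
def modelRow {I J : ℕ} (p : Fin I × Fin J) :
    ℝ × (Fin (I - 1) → ℝ) × (Fin (J - 1) → ℝ) :=
  (1,
   fun a => if (p.1 : ℕ) = (a : ℕ) then 1 else 0,
   fun b => if (p.2 : ℕ) = (b : ℕ) then 1 else 0)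


section CauchyBinetAux

open Matrix Finset Equiv Function

variable {R : Type*} [CommRing R] {ι S : Type*} [Fintype ι] [DecidableEq ι]
  [Fintype S] [DecidableEq S]

local notation "ε " σ:max => ((Equiv.Perm.sign σ : ℤ) : R)

/-- variant of `Matrix.det_mul_aux` for rectangular situation -/
theorem det_mul_aux' {M : Matrix ι S R} {N : Matrix S ι R} {p : ι → S} (H : ¬Injective p) :
    (∑ σ : Equiv.Perm ι, ε σ * ∏ x, M (σ x) (p x) * N (p x) x) = 0 := by
  obtain ⟨i, j, hpij, hij⟩ : ∃ i j, p i = p j ∧ i ≠ j := by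
    rw [Injective] at H
    push_neg at H
    exact H
  exact
    Finset.sum_involution (fun σ _ => σ * Equiv.swap i j)
      (fun σ _ => by
        have : (∏ x, M (σ x) (p x)) = ∏ x, M ((σ * Equiv.swap i j) x) (p x) :=
          Fintype.prod_equiv (Equiv.swap i j) _ _ (by simp [Equiv.apply_swap_eq_self hpij])
        simp [this, Equiv.Perm.sign_swap hij, -Equiv.Perm.sign_swap', prod_mul_distrib])
      (fun σ _ _ => (not_congr Equiv.mul_swap_eq_iff).mpr hij) (fun _ _ => mem_univ _)
      fun σ _ => Equiv.mul_swap_involutive i j σ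

theorem perm_sum_eq_det_mul (A B : Matrix ι ι R) :
    ∑ τ : Equiv.Perm ι, ∑ σ : Equiv.Perm ι, ε σ * ∏ i, A (σ i) (τ i) * B (τ i) i
      = det A * det B := by
  rw [← det_mul]
  refine Eq.symm ?_
  calc
    det (A * B) = ∑ p : ι → ι, ∑ σ : Equiv.Perm ι, ε σ * ∏ i, A (σ i) (p i) * B (p i) i := by
      simp only [det_apply', mul_apply, prod_univ_sum, mul_sum, Fintype.piFinset_univ]
      rw [Finset.sum_comm]
    _ = ∑ p : ι → ι with Bijective p,
          ∑ σ : Equiv.Perm ι, ε σ * ∏ i, A (σ i) (p i) * B (p i) i := by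
      refine (Finset.sum_subset (filter_subset _ _) fun f _ hbij ↦ Matrix.det_mul_aux ?_).symm
      simpa only [true_and, mem_filter, mem_univ] using hbij
    _ = ∑ τ : Equiv.Perm ι, ∑ σ : Equiv.Perm ι, ε σ * ∏ i, A (σ i) (τ i) * B (τ i) i :=
      Finset.sum_bij (fun p h ↦ Equiv.ofBijective p (mem_filter.1 h).2) (fun _ _ ↦ mem_univ _)
        (fun _ _ _ _ h ↦ by injection h)
        (fun b _ ↦ ⟨b, mem_filter.2 ⟨mem_univ _, b.bijective⟩, Equiv.coe_fn_injective rfl⟩)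
        fun _ _ ↦ rfl

theorem cauchy_binet (M : Matrix ι S R) (N : Matrix S ι R) (e : Finset S → (ι → S))
    (he : ∀ F : Finset S, F.card = Fintype.card ι → Injective (e F) ∧ ∀ i, e F i ∈ F) :
    det (M * N) = ∑ F ∈ (univ : Finset S).powersetCard (Fintype.card ι),
      det (M.submatrix id (e F)) * det (N.submatrix (e F) id) := by
  have himg : ∀ F : Finset S, F.card = Fintype.card ι → Finset.image (e F) univ = F := by
    intro F hF
    refine Finset.eq_of_subset_of_card_le ?_ ?_
    · intro x hx
      obtain ⟨i, _, rfl⟩ := Finset.mem_image.1 hx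
      exact (he F hF).2 i
    · rw [Finset.card_image_of_injective _ (he F hF).1, Finset.card_univ, hF]
  calc
    det (M * N) = ∑ p : ι → S, ∑ σ : Equiv.Perm ι, ε σ * ∏ i, M (σ i) (p i) * N (p i) i := by
      simp only [det_apply', mul_apply, prod_univ_sum, mul_sum, Fintype.piFinset_univ]
      rw [Finset.sum_comm]
    _ = ∑ p : ι → S with Injective p,
          ∑ σ : Equiv.Perm ι, ε σ * ∏ i, M (σ i) (p i) * N (p i) i := by
      refine (Finset.sum_subset (filter_subset _ _) fun f _ hinj ↦ det_mul_aux' ?_).symm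
      simpa only [true_and, mem_filter, mem_univ] using hinj
    _ = ∑ F ∈ (univ : Finset S).powersetCard (Fintype.card ι),
          ∑ p ∈ Finset.filter (fun p => Finset.image p univ = F)
              (Finset.filter (fun p : ι → S => Injective p) univ),
          ∑ σ : Equiv.Perm ι, ε σ * ∏ i, M (σ i) (p i) * N (p i) i := by
      refine (Finset.sum_fiberwise_of_maps_to ?_ _).symm
      intro p hp
      rw [Finset.mem_filter] at hp
      rw [Finset.mem_powersetCard_univ, Finset.card_image_of_injective _ hp.2, Finset.card_univ]
    _ = ∑ F ∈ (univ : Finset S).powersetCard (Fintype.card ι),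
          det (M.submatrix id (e F)) * det (N.submatrix (e F) id) := by
      refine Finset.sum_congr rfl fun F hF => ?_
      rw [Finset.mem_powersetCard_univ] at hF
      obtain ⟨hinj, _⟩ := he F hF
      rw [← perm_sum_eq_det_mul]
      refine (Finset.sum_bij (fun (τ : Equiv.Perm ι) _ => e F ∘ τ) ?_ ?_ ?_ ?_).symm
      · intro τ _
        simp only [Finset.mem_filter, Finset.mem_univ, true_and]
        constructor
        · exact hinj.comp τ.injective
        · rw [← Finset.image_image, Finset.image_univ_equiv]
          exact himg F hF
      · intro τ _ τ' _ h
        ext i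
        exact hinj (congrFun h i)
      · intro p hp
        rw [Finset.mem_filter, Finset.mem_filter] at hp
        obtain ⟨⟨-, hpinj⟩, hpimg⟩ := hp
        have hval : ∀ i, ∃ j, e F j = p i := by
          intro i
          have : p i ∈ F := by
            rw [← hpimg]; exact Finset.mem_image_of_mem _ (mem_univ i)
          rw [← himg F hF] at this
          obtain ⟨j, -, hj⟩ := Finset.mem_image.1 this
          exact ⟨j, hj⟩
        choose τ0 hτ0 using hval
        have hτ0inj : Injective τ0 := by
          intro i i' h
          apply hpinj
          rw [← hτ0 i, ← hτ0 i', h]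
        refine ⟨Equiv.ofBijective τ0 (Finite.injective_iff_bijective.mp hτ0inj), mem_univ _, ?_⟩
        funext i
        exact hτ0 i
      · intro τ _; rfl

end CauchyBinetAux

open Matrix Finset Function


/-- A matrix in which every column has at most one `+1` entry, at most one `-1` entry,
and zeros elsewhere, has determinant `0`, `1` or `-1`. -/
theorem det_tu : ∀ (n : ℕ) (A : Matrix (Fin n) (Fin n) ℝ),
    (∀ i j, A i j = 0 ∨ A i j = 1 ∨ A i j = -1) →
    (∀ j i i', A i j = 1 → A i' j = 1 → i = i') →
    (∀ j i i', A i j = -1 → A i' j = -1 → i = i') →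
    det A = 0 ∨ det A = 1 ∨ det A = -1 := by
  intro n
  induction n with
  | zero => intro A _ _ _; right; left; exact Matrix.det_fin_zero
  | succ n IH =>
    intro A h1 h2 h3
    by_cases hz : ∃ j, ∀ i, A i j = 0
    · obtain ⟨j, hj⟩ := hz
      left
      apply Matrix.det_eq_zero_of_column_eq_zero j hj
    by_cases hs : ∃ j i0, A i0 j ≠ 0 ∧ ∀ i, i ≠ i0 → A i j = 0
    · obtain ⟨j, i0, hi0, hrest⟩ := hs
      have hexp := Matrix.det_succ_column A j
      rw [Finset.sum_eq_single i0 (fun i _ hne => by rw [hrest i hne]; ring) (by simp)] at hexp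
      have hminor := IH (A.submatrix (Fin.succAbove i0) (Fin.succAbove j))
        (fun i j => h1 _ _)
        (fun jj i i' hi hi' => Fin.succAbove_right_injective (p := i0)
          (h2 _ _ _ hi hi'))
        (fun jj i i' hi hi' => Fin.succAbove_right_injective (p := i0)
          (h3 _ _ _ hi hi'))
      have hsign : ((-1 : ℝ)) ^ ((i0 : ℕ) + (j : ℕ)) = 1 ∨ ((-1 : ℝ)) ^ ((i0 : ℕ) + (j : ℕ)) = -1 := by
        rcases Nat.even_or_odd ((i0 : ℕ) + (j : ℕ)) with h | h
        · left; exact h.neg_one_pow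
        · right; exact h.neg_one_pow
      have hval : A i0 j = 1 ∨ A i0 j = -1 := (h1 i0 j).resolve_left hi0
      rw [hexp]
      rcases hsign with hs' | hs' <;> rcases hval with hv | hv <;> rcases hminor with hm | hm | hm <;>
        simp [hs', hv, hm]
    -- every column has a +1 and a -1
    · left
      have hcol : ∀ j, ∃ iP iM : Fin (n+1), iP ≠ iM ∧ A iP j = 1 ∧ A iM j = -1 := by
        intro j
        push_neg at hz hs
        obtain ⟨i1, hi1⟩ := hz j
        obtain ⟨i2, hi2ne, hi2⟩ := hs j i1 hi1
        have hv1 := (h1 i1 j).resolve_left hi1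
        have hv2 := (h1 i2 j).resolve_left hi2
        rcases hv1 with hv1 | hv1 <;> rcases hv2 with hv2 | hv2
        · exact absurd (h2 j i1 i2 hv1 hv2) (Ne.symm hi2ne)
        · exact ⟨i1, i2, Ne.symm hi2ne, hv1, hv2⟩
        · exact ⟨i2, i1, hi2ne, hv2, hv1⟩
        · exact absurd (h3 j i1 i2 hv1 hv2) (Ne.symm hi2ne)
      -- rows sum to zero, so determinant vanishes
      rw [← Matrix.exists_vecMul_eq_zero_iff]
      refine ⟨fun _ => 1, ?_, ?_⟩
      · intro h
        have := congrFun h 0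
        simp at this
      · funext j
        obtain ⟨iP, iM, hne, hP, hM⟩ := hcol j
        have hzero : ∀ i, i ≠ iP → i ≠ iM → A i j = 0 := by
          intro i hiP hiM
          rcases h1 i j with h | h | h
          · exact h
          · exact absurd (h2 j i iP h hP) hiP
          · exact absurd (h3 j i iM h hM) hiM
        have : ∀ i : Fin (n+1), A i j =
            (if i = iP then 1 else 0) + (if i = iM then -1 else 0) := by
          intro i
          by_cases hiP : i = iP
          · subst hiP
            rw [if_pos rfl, if_neg hne]
            rw [hP]; ring
          · by_cases hiM : i = iM
            · subst hiM
              rw [if_neg hiP, if_pos rfl, hM]; ring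
            · rw [if_neg hiP, if_neg hiM, hzero i hiP hiM]; ring
        show (∑ i, 1 * A i j) = 0
        simp only [one_mul, this]
        rw [Finset.sum_add_distrib]
        simp


def dmat (I J : ℕ) : Matrix (Fin I ⊕ Fin (J - 1)) (Fin I × Fin J) ℝ :=
  Matrix.of fun x p =>
    Sum.elim (fun a : Fin I => if (p.1 : ℕ) = (a : ℕ) then 1 else 0)
      (fun b : Fin (J - 1) => if (p.2 : ℕ) = (b : ℕ) then -1 else 0) x

lemma sum_fin_ite {n k : ℕ} (hk : k < n) (f : Fin n → ℝ) :
    (∑ x : Fin n, if (x : ℕ) = k then f x else 0) = f ⟨k, hk⟩ := by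
  rw [Finset.sum_eq_single (⟨k, hk⟩ : Fin n)]
  · simp
  · intro b _ hb
    rw [if_neg]
    intro hc
    exact hb (Fin.ext hc)
  · simp

lemma dmat_mul_transpose (I J : ℕ) :
    dmat I J * (dmat I J)ᵀ =
      fromBlocks ((J : ℝ) • 1) (Matrix.of fun _ _ => -1)
        (Matrix.of fun _ _ => -1) ((I : ℝ) • 1) := by
  ext x y
  cases x with
  | inl a =>
    cases y with
    | inl a' =>
      rw [Matrix.mul_apply, Fintype.sum_prod_type]
      simp only [dmat, transpose_apply, of_apply, Sum.elim_inl, fromBlocks_apply₁₁,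
        Matrix.smul_apply, smul_eq_mul, Matrix.one_apply]
      simp [Fin.val_eq_val, ite_and, Finset.sum_ite_eq', eq_comm, mul_ite]
    | inr b =>
      have hb : (b : ℕ) < J := lt_of_lt_of_le b.2 (Nat.sub_le J 1)
      rw [Matrix.mul_apply, Fintype.sum_prod_type]
      simp only [dmat, transpose_apply, of_apply, Sum.elim_inl, Sum.elim_inr,
        fromBlocks_apply₁₂, mul_ite, mul_one, mul_zero, ite_mul, one_mul, zero_mul,
        mul_neg, neg_zero]
      have h : ∀ x : Fin I, (∑ x1 : Fin J, if (x1 : ℕ) = (b : ℕ)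
          then -(if (x : ℕ) = (a : ℕ) then (1:ℝ) else 0) else 0)
          = -(if (x : ℕ) = (a : ℕ) then (1:ℝ) else 0) := by
        intro x
        rw [sum_fin_ite hb]
      rw [Finset.sum_congr rfl (fun x _ => h x)]

      simp [Fin.val_eq_val, Finset.sum_ite_eq']
  | inr b =>
    have hb : (b : ℕ) < J := lt_of_lt_of_le b.2 (Nat.sub_le J 1)
    cases y with
    | inl a' =>
      rw [Matrix.mul_apply, Fintype.sum_prod_type]
      simp only [dmat, transpose_apply, of_apply, Sum.elim_inl, Sum.elim_inr,
        fromBlocks_apply₂₁, mul_ite, mul_one, mul_zero, ite_mul, one_mul, zero_mul,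
        neg_mul, neg_zero]
      have h : ∀ x : Fin I, (∑ x1 : Fin J,
          if (x : ℕ) = (a' : ℕ) then (if (x1 : ℕ) = (b : ℕ) then (-1:ℝ) else 0) else 0)
          = (if (x : ℕ) = (a' : ℕ) then (-1:ℝ) else 0) := by
        intro x
        by_cases hx : (x : ℕ) = (a' : ℕ)
        · simp only [if_pos hx]
          exact sum_fin_ite hb _
        · simp [hx]
      rw [Finset.sum_congr rfl (fun x _ => h x)]
      simp [Fin.val_eq_val, Finset.sum_ite_eq']
    | inr b' =>
      rw [Matrix.mul_apply, Fintype.sum_prod_type]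
      simp only [dmat, transpose_apply, of_apply, Sum.elim_inr,
        fromBlocks_apply₂₂, mul_ite, mul_one, mul_zero, ite_mul, one_mul, zero_mul,
        neg_mul, neg_neg, neg_zero, Matrix.smul_apply, smul_eq_mul, Matrix.one_apply]
      have hb' : (b' : ℕ) < J := lt_of_lt_of_le b'.2 (Nat.sub_le J 1)
      have h : (∑ x : Fin J, if (x : ℕ) = (b' : ℕ)
          then (if (x : ℕ) = (b : ℕ) then (1:ℝ) else 0) else 0)
          = if b = b' then 1 else 0 := by
        rw [sum_fin_ite hb' (fun x : Fin J => if (x : ℕ) = (b : ℕ) then (1:ℝ) else 0)]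
        by_cases hbb : b = b'
        · simp [hbb]
        · rw [if_neg hbb, if_neg]
          intro hc
          exact hbb (Fin.ext (by simpa using hc.symm))
      rw [Finset.sum_congr rfl (fun x _ => h), Finset.sum_const, Finset.card_univ,
        Fintype.card_fin]
      by_cases hbb : b = b' <;> simp [hbb]

lemma det_dmat_mul_transpose {I J : ℕ} (hI : 2 ≤ I) (hJ : 2 ≤ J) :
    det (dmat I J * (dmat I J)ᵀ) = (I : ℝ) ^ (J - 1) * (J : ℝ) ^ (I - 1) := by
  have hJ0 : (J : ℝ) ≠ 0 := Nat.cast_ne_zero.mpr (by omega)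
  rw [dmat_mul_transpose]
  letI : Invertible ((J : ℝ) • (1 : Matrix (Fin I) (Fin I) ℝ)) :=
    ⟨(J : ℝ)⁻¹ • 1,
     by rw [Matrix.smul_mul, Matrix.one_mul, smul_smul, inv_mul_cancel₀ hJ0, one_smul],
     by rw [Matrix.smul_mul, Matrix.one_mul, smul_smul, mul_inv_cancel₀ hJ0, one_smul]⟩
  rw [Matrix.det_fromBlocks₁₁]
  have hinv : ⅟((J : ℝ) • (1 : Matrix (Fin I) (Fin I) ℝ)) = (J : ℝ)⁻¹ • 1 := rfl
  have hSchur : ((I : ℝ) • (1 : Matrix (Fin (J-1)) (Fin (J-1)) ℝ)) -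
      ((Matrix.of fun _ _ => (-1 : ℝ)) : Matrix (Fin (J-1)) (Fin I) ℝ) *
        ⅟((J : ℝ) • (1 : Matrix (Fin I) (Fin I) ℝ)) *
        ((Matrix.of fun _ _ => (-1 : ℝ)) : Matrix (Fin I) (Fin (J-1)) ℝ) =
      (I : ℝ) • (1 + Matrix.replicateCol Unit (fun _ : Fin (J-1) => -(J : ℝ)⁻¹) * Matrix.replicateRow Unit (fun _ : Fin (J-1) => (1:ℝ))) := by
    rw [hinv]
    ext b b'
    simp only [Matrix.sub_apply, Matrix.smul_apply, smul_eq_mul, Matrix.one_apply, Matrix.mul_apply,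
      Matrix.of_apply, Matrix.replicateCol_apply, Matrix.replicateRow_apply, Matrix.add_apply,
      Finset.sum_const, Finset.card_univ, Fintype.card_fin]
    have hin : ∀ x : Fin I, (∑ x1 : Fin I, -1 * ((↑J)⁻¹ * if x1 = x then (1:ℝ) else 0))
        = -(J:ℝ)⁻¹ := by
      intro x
      rw [Finset.sum_eq_single x (fun x1 _ hx1 => by rw [if_neg hx1]; ring) (by simp)]
      simp
    rw [Finset.sum_congr rfl (fun x _ => by rw [hin x])]
    simp only [Fintype.card_unit, one_smul, Finset.sum_const, Finset.card_univ,
      Fintype.card_fin, nsmul_eq_mul]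
    ring
  rw [hSchur]
  rw [Matrix.det_smul, Matrix.det_one, Fintype.card_fin, mul_one, Matrix.det_smul,
    Fintype.card_fin, Matrix.det_one_add_replicateCol_mul_replicateRow]
  have hdot : (fun _ : Fin (J-1) => (1:ℝ)) ⬝ᵥ (fun _ : Fin (J-1) => -(J : ℝ)⁻¹) = -((J:ℝ) - 1) * (J:ℝ)⁻¹ := by
    simp [dotProduct, Finset.sum_const, Fintype.card_fin]
    rw [Nat.cast_sub (by omega : 1 ≤ J)]
    ring
  rw [hdot]
  have hJI : (J : ℝ) ^ I = (J : ℝ) ^ (I - 1) * J := by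
    rw [← pow_succ]
    congr 1
    omega
  rw [hJI]
  have : (1 : ℝ) + -((J:ℝ) - 1) * (J:ℝ)⁻¹ = (J:ℝ)⁻¹ := by field_simp; ring
  rw [this]
  field_simp


/-- Linear transformation taking model rows to columns of `dmat`. -/
def tmap (I J : ℕ) :
    (ℝ × (Fin (I - 1) → ℝ) × (Fin (J - 1) → ℝ)) →ₗ[ℝ] (Fin I ⊕ Fin (J - 1) → ℝ) where
  toFun v := Sum.elim
      (fun a : Fin I => if h : (a : ℕ) < I - 1 then v.2.1 ⟨a, h⟩ else v.1 - ∑ a', v.2.1 a')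
      (fun b : Fin (J - 1) => -(v.2.2 b))
  map_add' u v := by
    funext x
    cases x with
    | inl a =>
      by_cases h : (a : ℕ) < I - 1 <;>
        simp [h, Finset.sum_add_distrib] <;> ring
    | inr b =>
      simp only [Sum.elim_inr]
      show -((u.2.2 + v.2.2) b) = _
      simp [neg_add]
      ring
  map_smul' c v := by
    funext x
    cases x with
    | inl a =>
      by_cases h : (a : ℕ) < I - 1
      · simp [h]
      · simp [h, Prod.smul_fst, Prod.smul_snd, Pi.smul_apply, smul_sub, Finset.smul_sum]
        rw [mul_sub, Finset.mul_sum]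
    | inr b => simp

lemma tmap_ker (I J : ℕ) (hI : 2 ≤ I) : LinearMap.ker (tmap I J) = ⊥ := by
  rw [LinearMap.ker_eq_bot]
  intro u v huv
  have h2 : u.2.2 = v.2.2 := by
    funext b
    have := congrFun huv (Sum.inr b)
    simpa [tmap] using this
  have h1 : u.2.1 = v.2.1 := by
    funext a
    have ha : (a : ℕ) < I - 1 := a.2
    have := congrFun huv (Sum.inl ⟨(a : ℕ), lt_of_lt_of_le ha (Nat.sub_le I 1)⟩)
    simpa [tmap, ha] using this
  have h0 : u.1 = v.1 := by
    have hlt : I - 1 < I := Nat.sub_lt (by omega) one_pos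
    have := congrFun huv (Sum.inl ⟨I - 1, hlt⟩)
    simp only [tmap, LinearMap.coe_mk, AddHom.coe_mk, Sum.elim_inl, lt_irrefl, dif_neg,
      not_lt_of_gt] at this
    rw [h1] at this
    simpa [tmap] using this
  exact Prod.ext h0 (Prod.ext h1 h2)

lemma tmap_modelRow {I J : ℕ} (hI : 2 ≤ I) (p : Fin I × Fin J) :
    tmap I J (modelRow p) = fun x => dmat I J x p := by
  funext x
  cases x with
  | inl a =>
    show (if h : (a : ℕ) < I - 1
        then (if (p.1 : ℕ) = ((⟨(a : ℕ), h⟩ : Fin (I - 1)) : ℕ) then (1:ℝ) else 0)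
        else 1 - ∑ a' : Fin (I - 1), if (p.1 : ℕ) = (a' : ℕ) then (1:ℝ) else 0)
      = if (p.1 : ℕ) = (a : ℕ) then 1 else 0
    by_cases h : (a : ℕ) < I - 1
    · simp [h]
    · rw [dif_neg h]
      have ha : (a : ℕ) = I - 1 := by omega
      have hsum : (∑ a' : Fin (I - 1), if (p.1 : ℕ) = (a' : ℕ) then (1:ℝ) else 0)
          = if (p.1 : ℕ) < I - 1 then 1 else 0 := by
        by_cases hp : (p.1 : ℕ) < I - 1
        · rw [if_pos hp, Finset.sum_eq_single (⟨(p.1 : ℕ), hp⟩ : Fin (I - 1))]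
          · simp
          · intro b _ hb
            rw [if_neg]
            intro hc
            exact hb (by apply Fin.ext; simpa using hc.symm)
          · simp
        · rw [if_neg hp]
          apply Finset.sum_eq_zero
          intro b _
          rw [if_neg]
          intro hc
          exact hp (hc ▸ b.2)
      rw [hsum]
      have hp1 : (p.1 : ℕ) < I := p.1.2
      by_cases hp : (p.1 : ℕ) < I - 1
      · rw [if_pos hp, if_neg (by omega)]; ring
      · rw [if_neg hp, if_pos (by omega)]; ring
  | inr b =>
    show -(if (p.2 : ℕ) = (b : ℕ) then (1:ℝ) else 0) = if (p.2 : ℕ) = (b : ℕ) then -1 else 0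
    split <;> ring


lemma dmat_det_tu {I J : ℕ} (f : Fin I ⊕ Fin (J - 1) → Fin I × Fin J) :
    det ((dmat I J).submatrix id f) = 0 ∨ det ((dmat I J).submatrix id f) = 1 ∨
      det ((dmat I J).submatrix id f) = -1 := by
  set B := ((dmat I J).submatrix id f).submatrix
      (finSumFinEquiv (m := I) (n := J - 1)).symm finSumFinEquiv.symm with hB
  have hent : ∀ i j : Fin (I + (J - 1)), B i j =
      Sum.elim (fun a : Fin I => if ((f (finSumFinEquiv.symm j)).1 : ℕ) = (a : ℕ) then (1:ℝ) else 0)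
        (fun b : Fin (J - 1) =>
          if ((f (finSumFinEquiv.symm j)).2 : ℕ) = (b : ℕ) then (-1:ℝ) else 0)
        (finSumFinEquiv.symm i) := fun i j => rfl
  have key := det_tu (I + (J - 1)) B ?_ ?_ ?_
  · rwa [hB, Matrix.det_submatrix_equiv_self] at key
  · intro i j
    rw [hent i j]
    rcases finSumFinEquiv.symm i with a | b <;>
      · simp only [Sum.elim_inl, Sum.elim_inr]
        split <;> norm_num
  · intro j i i' h h'
    rw [hent i j] at h
    rw [hent i' j] at h'
    apply finSumFinEquiv.symm.injective
    rcases hx : finSumFinEquiv.symm i with a | b <;> rw [hx] at h <;>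
      simp only [Sum.elim_inl, Sum.elim_inr] at h
    · rcases hx' : finSumFinEquiv.symm i' with a' | b' <;> rw [hx'] at h' <;>
        simp only [Sum.elim_inl, Sum.elim_inr] at h'
      · split at h
        · split at h'
          · congr 1
            apply Fin.ext
            omega
          · norm_num at h'
        · norm_num at h
      · split at h' <;> norm_num at h'
    · split at h <;> norm_num at h
  · intro j i i' h h'
    rw [hent i j] at h
    rw [hent i' j] at h'
    apply finSumFinEquiv.symm.injective
    rcases hx : finSumFinEquiv.symm i with a | b <;> rw [hx] at h <;>
      simp only [Sum.elim_inl, Sum.elim_inr] at h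
    · split at h <;> norm_num at h
    · rcases hx' : finSumFinEquiv.symm i' with a' | b' <;> rw [hx'] at h' <;>
        simp only [Sum.elim_inl, Sum.elim_inr] at h'
      · split at h' <;> norm_num at h'
      · split at h
        · split at h'
          · congr 1
            apply Fin.ext
            omega
          · norm_num at h'
        · norm_num at h

lemma linIndep_iff_det {I J : ℕ} (hI : 2 ≤ I) (F : Finset (Fin I × Fin J))
    (eqv : (Fin I ⊕ Fin (J - 1)) ≃ ↥F) :
    LinearIndependent ℝ (fun p : F => modelRow p.1) ↔
      det ((dmat I J).submatrix id (fun x => ((eqv x : ↥F) : Fin I × Fin J))) ≠ 0 := by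
  rw [← LinearMap.linearIndependent_iff (tmap I J) (tmap_ker I J hI)]
  have h1 : (⇑(tmap I J) ∘ fun p : F => modelRow (p : Fin I × Fin J)) =
      fun p : F => (fun x => dmat I J x (p : Fin I × Fin J)) :=
    funext fun p => tmap_modelRow hI (p : Fin I × Fin J)
  rw [h1, ← linearIndependent_equiv eqv]
  have h2 : ((fun p : F => (fun x => dmat I J x (p : Fin I × Fin J))) ∘ eqv) =
      fun y => ((dmat I J).submatrix id (fun x => ((eqv x : ↥F) : Fin I × Fin J)))ᵀ y := rfl
  rw [h2, ← Matrix.col_def, Matrix.linearIndependent_cols_iff_isUnit, Matrix.isUnit_iff_isUnit_det,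
    isUnit_iff_ne_zero]

/-- The number of saturated fractions of the `I × J` design, i.e. finsets of
`Fin I × Fin J` with `I + J - 1` points whose model rows are linearly independent
over `ℝ`, equals `I^(J-1) · J^(I-1)`. -/
theorem card_saturated_designs {I J : ℕ} (hI : 2 ≤ I) (hJ : 2 ≤ J) :
    Nat.card {F : Finset (Fin I × Fin J) //
      F.card = I + J - 1 ∧
      LinearIndependent ℝ (fun p : F => modelRow p.1)} =
    I ^ (J - 1) * J ^ (I - 1) := by
  classical
  have hcard : Fintype.card (Fin I ⊕ Fin (J - 1)) = I + J - 1 := by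
    simp only [Fintype.card_sum, Fintype.card_fin]
    omega
  haveI : Nonempty (Fin I × Fin J) := ⟨⟨⟨0, by omega⟩, ⟨0, by omega⟩⟩⟩
  set e : Finset (Fin I × Fin J) → (Fin I ⊕ Fin (J - 1)) → Fin I × Fin J := fun F =>
    if h : Fintype.card (Fin I ⊕ Fin (J - 1)) = Fintype.card ↥F
    then fun i => ((Fintype.equivOfCardEq h) i : Fin I × Fin J)
    else fun _ => Classical.arbitrary _ with hedef
  have he : ∀ F : Finset (Fin I × Fin J), F.card = Fintype.card (Fin I ⊕ Fin (J - 1)) →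
      Function.Injective (e F) ∧ ∀ i, e F i ∈ F := by
    intro F hF
    have h : Fintype.card (Fin I ⊕ Fin (J - 1)) = Fintype.card ↥F := by
      rw [Fintype.card_coe, hF]
    have he' : e F = fun i => ((Fintype.equivOfCardEq h) i : Fin I × Fin J) := dif_pos h
    constructor
    · rw [he']
      exact Subtype.coe_injective.comp (Fintype.equivOfCardEq h).injective
    · rw [he']
      exact fun i => ((Fintype.equivOfCardEq h) i).2
  have hCB := cauchy_binet (dmat I J) (dmat I J)ᵀ e he
  have hCB2 : ((I:ℝ) ^ (J - 1) * (J:ℝ) ^ (I - 1)) =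
      ∑ F ∈ (univ : Finset (Fin I × Fin J)).powersetCard (Fintype.card (Fin I ⊕ Fin (J - 1))),
        det ((dmat I J).submatrix id (e F)) ^ 2 := by
    rw [← det_dmat_mul_transpose hI hJ, hCB]
    refine Finset.sum_congr rfl fun F _ => ?_
    rw [sq]
    congr 1
    rw [← Matrix.det_transpose ((dmat I J).submatrix id (e F))]
    rfl
  have hterm : ∀ F ∈ (univ : Finset (Fin I × Fin J)).powersetCard
      (Fintype.card (Fin I ⊕ Fin (J - 1))),
      det ((dmat I J).submatrix id (e F)) ^ 2 =
        (if LinearIndependent ℝ (fun p : F => modelRow p.1) then (1:ℝ) else 0) := by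
    intro F hF
    rw [Finset.mem_powersetCard_univ] at hF
    have h : Fintype.card (Fin I ⊕ Fin (J - 1)) = Fintype.card ↥F := by
      rw [Fintype.card_coe, hF]
    have he' : e F = fun i => ((Fintype.equivOfCardEq h) i : Fin I × Fin J) := dif_pos h
    have hiff := linIndep_iff_det hI F (Fintype.equivOfCardEq h)
    rw [← he'] at hiff
    rcases dmat_det_tu (e F) with h0 | h1 | h1
    · have hni : ¬ LinearIndependent ℝ (fun p : F => modelRow p.1) := by
        rw [hiff]
        simpa using h0
      rw [if_neg hni, h0]
      ring
    · have hli : LinearIndependent ℝ (fun p : F => modelRow p.1) := by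
        rw [hiff, h1]
        norm_num
      rw [if_pos hli, h1]
      norm_num
    · have hli : LinearIndependent ℝ (fun p : F => modelRow p.1) := by
        rw [hiff, h1]
        norm_num
      rw [if_pos hli, h1]
      norm_num
  have hcount : ((Nat.card {F : Finset (Fin I × Fin J) //
      F.card = I + J - 1 ∧ LinearIndependent ℝ (fun p : F => modelRow p.1)} : ℕ) : ℝ) =
      ∑ F ∈ (univ : Finset (Fin I × Fin J)).powersetCard (Fintype.card (Fin I ⊕ Fin (J - 1))),
        (if LinearIndependent ℝ (fun p : F => modelRow p.1) then (1:ℝ) else 0) := by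
    rw [Finset.sum_boole]
    rw [Nat.card_eq_fintype_card, Fintype.card_subtype]
    congr 1
    apply Finset.card_bij (fun F _ => F)
    · intro F hF
      rw [Finset.mem_filter] at hF
      rw [Finset.mem_filter, Finset.mem_powersetCard_univ]
      exact ⟨hF.2.1.trans hcard.symm, hF.2.2⟩
    · intro F _ F' _ h
      exact h
    · intro F hF
      rw [Finset.mem_filter, Finset.mem_powersetCard_univ] at hF
      exact ⟨F, Finset.mem_filter.mpr ⟨Finset.mem_univ F, hF.1.trans hcard, hF.2⟩, rfl⟩
  have hfinal : ((Nat.card {F : Finset (Fin I × Fin J) //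
      F.card = I + J - 1 ∧ LinearIndependent ℝ (fun p : F => modelRow p.1)} : ℕ) : ℝ) =
      ((I ^ (J - 1) * J ^ (I - 1) : ℕ) : ℝ) := by
    rw [hcount, ← Finset.sum_congr rfl hterm, ← hCB2]
    push_cast
    ring
  exact_mod_cast hfinal
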